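/- Let X be a nondegenerate real random variable with continuous CDF Φ, supported on the nonnegative reals (X ≥ 0 a.s.), and let a̲ = 1 < ā. Define for H ∈ (0,1] the diameter δ(H) = sup_{x∈ℝ} |Φ(x) − Φ(ā^{H−H₀} x)|. Then δ(H) = 0 if and only if H = H₀, δ is non-increasing on H ≤ H₀, and non-decreasing on H ≥ H₀. -/
import Mathlib


open MeasureTheory Filter Topology

/-- The diameter `δ(H) = sup_x |Φ(x) − Φ(ā^(H−H₀) x)|` vanishes iff `H = H₀`, is
non-increasing for `H ≤ H₀` and non-decreasing for `H ≥ H₀`. -/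
theorem stmt3 {Ω : Type*} [MeasurableSpace Ω] (ℙ : Measure Ω) [IsProbabilityMeasure ℙ]
    (X : Ω → ℝ) (Φ : ℝ → ℝ)
    (hΦ : ∀ x, Φ x = (ℙ {ω | X ω ≤ x}).toReal)
    (hcont : Continuous Φ)
    (hnonneg : ∀ᵐ ω ∂ℙ, 0 ≤ X ω)
    (hnondeg : ¬ ∃ c : ℝ, ∀ᵐ ω ∂ℙ, X ω = c)
    (H₀ : ℝ) (hH₀ : H₀ ∈ Set.Ioc (0:ℝ) 1)
    (ab : ℝ) (hab : 1 < ab)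
    (δ : ℝ → ℝ)
    (hδ : ∀ H, δ H = ⨆ x : ℝ, |Φ x - Φ (ab ^ (H - H₀) * x)|) :
    (∀ H ∈ Set.Ioc (0:ℝ) 1, (δ H = 0 ↔ H = H₀)) ∧
    (∀ H₁ ∈ Set.Ioc (0:ℝ) 1, ∀ H₂ ∈ Set.Ioc (0:ℝ) 1, H₁ ≤ H₂ → H₂ ≤ H₀ → δ H₂ ≤ δ H₁) ∧
    (∀ H₁ ∈ Set.Ioc (0:ℝ) 1, ∀ H₂ ∈ Set.Ioc (0:ℝ) 1, H₁ ≤ H₂ → H₀ ≤ H₁ → δ H₁ ≤ δ H₂) := by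
  have hab0 : (0:ℝ) < ab := lt_trans one_pos hab
  -- Φ takes values in [0,1]
  have hΦ0 : ∀ x, 0 ≤ Φ x := fun x => by rw [hΦ]; exact ENNReal.toReal_nonneg
  have hΦ1 : ∀ x, Φ x ≤ 1 := fun x => by
    rw [hΦ]
    have := ENNReal.toReal_mono (a := ℙ {ω | X ω ≤ x}) (b := 1) (by simp) prob_le_one
    simpa using this
  -- Φ is monotone
  have hmono : Monotone Φ := by
    intro x y hxy
    rw [hΦ, hΦ]
    exact ENNReal.toReal_mono (measure_ne_top _ _)
      (measure_mono fun ω hω => le_trans hω hxy)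
  -- Φ vanishes on negatives
  have hneg : ∀ x : ℝ, x < 0 → Φ x = 0 := by
    intro x hx
    rw [hΦ]
    have h0 : ℙ {ω | ¬ (0 ≤ X ω)} = 0 := by
      rw [← MeasureTheory.ae_iff]; exact hnonneg
    have : ℙ {ω | X ω ≤ x} = 0 :=
      measure_mono_null (fun ω hω => by
        simp only [Set.mem_setOf_eq, not_le] at *
        exact lt_of_le_of_lt hω hx) h0
    simp [this]
  -- Φ 0 = 0 by continuity
  have hzero : Φ 0 = 0 := by
    have ht : Tendsto Φ (𝓝[<] (0:ℝ)) (𝓝 (Φ 0)) :=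
      (hcont.tendsto 0).mono_left nhdsWithin_le_nhds
    have hle : Φ 0 ≤ 0 := by
      refine le_of_tendsto ht ?_
      filter_upwards [self_mem_nhdsWithin] with x hx
      exact le_of_eq (hneg x hx)
    exact le_antisymm hle (hΦ0 0)
  have hnonpos : ∀ x : ℝ, x ≤ 0 → Φ x = 0 := by
    intro x hx
    rcases lt_or_eq_of_le hx with h | h
    · exact hneg x h
    · rw [h]; exact hzero
  -- the range of any |Φ x − Φ (c x)| is bounded above
  have hbdd : ∀ c : ℝ, BddAbove (Set.range fun x : ℝ => |Φ x - Φ (c * x)|) := by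
    intro c
    refine ⟨2, ?_⟩
    rintro _ ⟨x, rfl⟩
    have := abs_sub_abs_le_abs_sub (Φ x) (Φ (c * x))
    have h1 := hΦ0 x; have h2 := hΦ1 x
    have h3 := hΦ0 (c * x); have h4 := hΦ1 (c * x)
    rw [abs_sub_le_iff]
    constructor <;> linarith
  -- scale-invariance forces c = 1
  have key : ∀ c : ℝ, 0 < c → (∀ x, Φ x = Φ (c * x)) → c = 1 := by
    intro c hc hinv
    by_contra hne
    -- produce d < 1 with invariance
    have hinv' : ∀ x, Φ x = Φ (c⁻¹ * x) := by
      intro x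
      have := hinv (c⁻¹ * x)
      rw [← mul_assoc, mul_inv_cancel₀ (ne_of_gt hc), one_mul] at this
      exact this.symm
    obtain ⟨d, hd0, hd1, hdinv⟩ : ∃ d : ℝ, 0 < d ∧ d < 1 ∧ ∀ x, Φ x = Φ (d * x) := by
      rcases lt_or_gt_of_ne hne with h | h
      · exact ⟨c, hc, h, hinv⟩
      · exact ⟨c⁻¹, inv_pos.mpr hc, inv_lt_one_of_one_lt₀ h, hinv'⟩
    -- iterate: Φ x = Φ (d^n x)
    have hiter : ∀ (n : ℕ) (x : ℝ), Φ x = Φ (d ^ n * x) := by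
      intro n
      induction n with
      | zero => intro x; simp
      | succ n ih =>
        intro x
        have := ih (d * x)
        rw [← hdinv x] at this
        rw [this, pow_succ]
        ring_nf
    -- hence Φ x = Φ 0 = 0 for all x
    have hall : ∀ x : ℝ, Φ x = 0 := by
      intro x
      have htends : Tendsto (fun n : ℕ => d ^ n * x) atTop (𝓝 0) := by
        simpa using (tendsto_pow_atTop_nhds_zero_of_lt_one hd0.le hd1).mul_const x
      have h2 : Tendsto (fun n : ℕ => Φ (d ^ n * x)) atTop (𝓝 (Φ 0)) :=
        (hcont.tendsto 0).comp htends
      have h3 : Tendsto (fun _ : ℕ => Φ x) atTop (𝓝 (Φ 0)) := by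
        refine h2.congr fun n => (hiter n x).symm
      exact (tendsto_nhds_unique h3 tendsto_const_nhds).symm.trans hzero
    -- contradiction with ℙ univ = 1
    have hmeas : ∀ n : ℕ, ℙ {ω | X ω ≤ (n : ℝ)} = 0 := by
      intro n
      have := hall (n : ℝ)
      rw [hΦ] at this
      rcases (ENNReal.toReal_eq_zero_iff _).mp this with h | h
      · exact h
      · exact absurd h (measure_ne_top _ _)
    have hcover : (Set.univ : Set Ω) ⊆ ⋃ n : ℕ, {ω | X ω ≤ (n : ℝ)} := by
      intro ω _
      obtain ⟨n, hn⟩ := exists_nat_ge (X ω)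
      exact Set.mem_iUnion.mpr ⟨n, hn⟩
    have h2 : ℙ Set.univ ≤ ∑' n : ℕ, ℙ {ω | X ω ≤ (n : ℝ)} :=
      le_trans (measure_mono hcover) (measure_iUnion_le _)
    rw [tsum_congr hmeas, measure_univ] at h2
    simp at h2
  -- pointwise comparisons
  have point_le : ∀ c₁ c₂ : ℝ, 0 < c₁ → c₁ ≤ c₂ → c₂ ≤ 1 →
      ∀ x : ℝ, |Φ x - Φ (c₂ * x)| ≤ |Φ x - Φ (c₁ * x)| := by
    intro c₁ c₂ hc₁ h12 h21 x
    rcases le_or_gt 0 x with hx | hx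
    · have a1 : Φ (c₁ * x) ≤ Φ (c₂ * x) := hmono (mul_le_mul_of_nonneg_right h12 hx)
      have a2 : Φ (c₂ * x) ≤ Φ x := by
        have : c₂ * x ≤ x := by nlinarith
        exact hmono this
      rw [abs_of_nonneg (by linarith), abs_of_nonneg (by linarith)]
      linarith
    · rw [hneg x hx, hneg _ (mul_neg_of_pos_of_neg hc₁ hx),
        hneg _ (mul_neg_of_pos_of_neg (lt_of_lt_of_le hc₁ h12) hx)]
  have point_ge : ∀ c₁ c₂ : ℝ, 1 ≤ c₁ → c₁ ≤ c₂ →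
      ∀ x : ℝ, |Φ x - Φ (c₁ * x)| ≤ |Φ x - Φ (c₂ * x)| := by
    intro c₁ c₂ hc₁ h12 x
    rcases le_or_gt 0 x with hx | hx
    · have a0 : Φ x ≤ Φ (c₁ * x) := hmono (by nlinarith)
      have a1 : Φ (c₁ * x) ≤ Φ (c₂ * x) := hmono (mul_le_mul_of_nonneg_right h12 hx)
      rw [abs_of_nonpos (by linarith), abs_of_nonpos (by linarith)]
      linarith
    · have hc₁0 : (0:ℝ) < c₁ := lt_of_lt_of_le one_pos hc₁
      rw [hneg x hx, hneg _ (mul_neg_of_pos_of_neg hc₁0 hx),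
        hneg _ (mul_neg_of_pos_of_neg (lt_of_lt_of_le hc₁0 h12) hx)]
  refine ⟨?_, ?_, ?_⟩
  · -- δ H = 0 ↔ H = H₀
    intro H _
    constructor
    · intro h0
      have hc0 : (0:ℝ) < ab ^ (H - H₀) := Real.rpow_pos_of_pos hab0 _
      have hinv : ∀ x, Φ x = Φ (ab ^ (H - H₀) * x) := by
        intro x
        have hle : |Φ x - Φ (ab ^ (H - H₀) * x)| ≤ δ H := by
          rw [hδ]
          exact le_ciSup (hbdd _) x
        rw [h0] at hle
        have := le_antisymm hle (abs_nonneg _)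
        rwa [abs_eq_zero, sub_eq_zero] at this
      have := key _ hc0 hinv
      have h1 : ab ^ (H - H₀) = ab ^ (0:ℝ) := by rw [Real.rpow_zero]; exact this
      have h2 : H - H₀ = 0 := by
        by_contra hne
        rcases lt_or_gt_of_ne hne with h | h
        · exact absurd h1 (ne_of_lt ((Real.rpow_lt_rpow_left_iff hab).mpr h))
        · exact absurd h1.symm (ne_of_lt ((Real.rpow_lt_rpow_left_iff hab).mpr h))
      linarith
    · intro h
      rw [hδ, h]
      simp [Real.rpow_zero]
  · -- non-increasing on H ≤ H₀
    intro H₁ _ H₂ _ h12 h20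
    rw [hδ, hδ]
    refine ciSup_mono (hbdd _) ?_
    intro x
    refine point_le _ _ (Real.rpow_pos_of_pos hab0 _) ?_ ?_ x
    · exact (Real.rpow_le_rpow_left_iff hab).mpr (by linarith)
    · calc ab ^ (H₂ - H₀) ≤ ab ^ (0:ℝ) :=
            (Real.rpow_le_rpow_left_iff hab).mpr (by linarith)
        _ = 1 := Real.rpow_zero ab
  · -- non-decreasing on H ≥ H₀
    intro H₁ _ H₂ _ h12 h01
    rw [hδ, hδ]
    refine ciSup_mono (hbdd _) ?_
    intro x
    refine point_ge _ _ ?_ ?_ x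
    · calc (1:ℝ) = ab ^ (0:ℝ) := (Real.rpow_zero ab).symm
        _ ≤ ab ^ (H₁ - H₀) := (Real.rpow_le_rpow_left_iff hab).mpr (by linarith)
    · exact (Real.rpow_le_rpow_left_iff hab).mpr (by linarith)
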